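/- Let Σ₁, Σ₂ be symmetric positive-definite n×n matrices simultaneously diagonalized by an invertible V with |det V| = 1: V Σ₁ Vᵀ = diag(λᵢ), V Σ₂ Vᵀ = diag(λ'ᵢ). Then the maximum of det(Σ) over all symmetric positive-definite Σ satisfying Σ ⪯ Σ₁ and Σ ⪯ Σ₂ equals ∏ᵢ min(λᵢ, λ'ᵢ), i.e., equals det(min(Σ₁, Σ₂)) where min(Σ₁, Σ₂) = V⁻¹ diag(min(λᵢ, λ'ᵢ)) V⁻ᵀ. -/

import Mathlib

open Matrix

section Aux

variable {m : ℕ}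

private lemma conj_psd {A : Matrix (Fin m) (Fin m) ℝ} (B : Matrix (Fin m) (Fin m) ℝ)
    (hA : A.PosSemidef) : (B * A * Bᵀ).PosSemidef := by
  have := hA.mul_mul_conjTranspose_same B
  rwa [conjTranspose_eq_transpose_of_trivial] at this

private lemma conj_quad (A B : Matrix (Fin m) (Fin m) ℝ) (x : Fin m → ℝ) :
    dotProduct (star x) ((B * A * Bᵀ) *ᵥ x)
      = dotProduct (star (Bᵀ *ᵥ x)) (A *ᵥ (Bᵀ *ᵥ x)) := by
  simp only [star_trivial, ← mulVec_mulVec, dotProduct_mulVec]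
  congr 1
  rw [mulVec_transpose]

private lemma conj_pd {A B : Matrix (Fin m) (Fin m) ℝ} (hA : A.PosDef)
    (hB : IsUnit B.det) : (B * A * Bᵀ).PosDef := by
  refine Matrix.PosDef.of_dotProduct_mulVec_pos (conj_psd B hA.posSemidef).1 (fun x hx => ?_)
  have hBT : IsUnit Bᵀ.det := by rwa [det_transpose]
  have hy : Bᵀ *ᵥ x ≠ 0 := by
    intro h
    exact hx (mulVec_injective_iff_isUnit.2 ((Matrix.isUnit_iff_isUnit_det _).2 hBT) (h.trans (mulVec_zero _).symm))
  rw [conj_quad]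
  exact hA.dotProduct_mulVec_pos hy

private lemma psd_diag {M : Matrix (Fin m) (Fin m) ℝ} (hM : M.PosSemidef) (i : Fin m) :
    0 ≤ M i i := by
  have := hM.dotProduct_mulVec_nonneg (Pi.single i 1)
  simpa using this

private lemma pd_diag {M : Matrix (Fin m) (Fin m) ℝ} (hM : M.PosDef) (i : Fin m) :
    0 < M i i := by
  have := hM.dotProduct_mulVec_pos (x := Pi.single i 1) (fun h => by simpa using congrFun h i)
  simpa using this

/-- Hadamard's inequality for positive definite real matrices. -/
private lemma hadamard_ineq {T : Matrix (Fin m) (Fin m) ℝ} (hT : T.PosDef) :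
    T.det ≤ ∏ i, T i i := by
  rcases Nat.eq_zero_or_pos m with hm | hm
  · subst hm; simp
  have hdiag : ∀ i, 0 < T i i := pd_diag hT
  set e : Fin m → ℝ := fun i => Real.sqrt (T i i) with he_def
  have he : ∀ i, 0 < e i := fun i => Real.sqrt_pos.2 (hdiag i)
  have hee : ∀ i, e i * e i = T i i := fun i => Real.mul_self_sqrt (hdiag i).le
  set E : Matrix (Fin m) (Fin m) ℝ := diagonal (fun i => (e i)⁻¹) with hE_def
  set B : Matrix (Fin m) (Fin m) ℝ := E * T * E with hB_def
  have hEt : Eᵀ = E := diagonal_transpose _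
  have hB : B.PosSemidef := by
    have := conj_psd E hT.posSemidef
    rwa [hEt] at this
  have hherm := hB.1
  set μ : Fin m → ℝ := hherm.eigenvalues with hμ_def
  have hμnn : ∀ i, 0 ≤ μ i := hB.eigenvalues_nonneg
  have hBii : ∀ i, B i i = 1 := by
    intro i
    have : B i i = (e i)⁻¹ * T i i * (e i)⁻¹ := by
      simp [hB_def, hE_def, mul_diagonal, diagonal_mul]
    rw [this, ← hee i]
    field_simp
    rw [div_self (he i).ne']
  have htr : ∑ i, μ i = (m : ℝ) := by
    have h1 : B.trace = ∑ i, μ i := by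
      conv_lhs => rw [hherm.spectral_theorem, Unitary.conjStarAlgAut_apply]
      rw [trace_mul_cycle]
      rw [show (star (hherm.eigenvectorUnitary : Matrix (Fin m) (Fin m) ℝ)) *
          (hherm.eigenvectorUnitary : Matrix (Fin m) (Fin m) ℝ) = 1 from
        Unitary.coe_star_mul_self _]
      simp [trace_diagonal, hμ_def]
    have h2 : B.trace = ∑ i, B i i := by
      simp [Matrix.trace, Matrix.diag]
    rw [← h1, h2]
    simp [hBii]
  have hdetB : B.det = ∏ i, μ i := by
    have := hherm.det_eq_prod_eigenvalues
    simpa using this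
  -- AM-GM
  have hgm := Real.geom_mean_le_arith_mean (Finset.univ : Finset (Fin m))
      (fun _ => (1 : ℝ)) μ (fun i _ => zero_le_one)
      (by simp; positivity) (fun i _ => hμnn i)
  simp only [Real.rpow_one, one_mul, Finset.sum_const, Finset.card_univ, Fintype.card_fin,
    nsmul_eq_mul, mul_one] at hgm
  rw [htr] at hgm
  have hgm1 : (∏ i, μ i) ^ ((m : ℝ))⁻¹ ≤ 1 := by
    rw [div_self (by positivity : (m:ℝ) ≠ 0)] at hgm
    exact hgm
  have hprodle : (∏ i, μ i) ≤ 1 := by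
    have h0 : 0 ≤ ∏ i, μ i := Finset.prod_nonneg fun i _ => hμnn i
    have := pow_le_one₀ (Real.rpow_nonneg h0 _) hgm1 (n := m)
    rwa [Real.rpow_inv_natCast_pow h0 hm.ne'] at this
  have hdetBle : B.det ≤ 1 := hdetB ▸ hprodle
  -- relate det B and det T
  set c : ℝ := ∏ i, (e i)⁻¹ with hc_def
  have hc : 0 < c := Finset.prod_pos fun i _ => inv_pos.2 (he i)
  have hP : 0 < ∏ i, T i i := Finset.prod_pos fun i _ => hdiag i
  have hdetE : E.det = c := by simp [hE_def, hc_def]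
  have hdetBT : B.det = c * T.det * c := by
    rw [hB_def, det_mul, det_mul, hdetE]
  have hccP : c * c * (∏ i, T i i) = 1 := by
    rw [hc_def, ← Finset.prod_mul_distrib, ← Finset.prod_mul_distrib]
    apply Finset.prod_eq_one
    intro i _
    rw [← hee i]
    field_simp
    rw [div_self (he i).ne']
  nlinarith [hdetBT ▸ hdetBle, hccP, hc, hP, hT.det_pos]

end Aux

/-- The maximum of det Σ over PD matrices Σ with Σ ⪯ Σ₁ and Σ ⪯ Σ₂ equals
∏ min(λᵢ,λ'ᵢ) = det(min(Σ₁,Σ₂)), when |det V| = 1. -/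
theorem stmt_4 {n : ℕ} (S1 S2 V : Matrix (Fin n) (Fin n) ℝ)
    (lam lam' : Fin n → ℝ)
    (hS1 : S1.PosDef) (hS2 : S2.PosDef)
    (hV : IsUnit V.det) (hdet : |V.det| = 1)
    (h1 : V * S1 * Vᵀ = Matrix.diagonal lam)
    (h2 : V * S2 * Vᵀ = Matrix.diagonal lam')
    (hlam : ∀ i, 0 < lam i) (hlam' : ∀ i, 0 < lam' i) :
    IsGreatest {d : ℝ | ∃ S : Matrix (Fin n) (Fin n) ℝ, S.PosDef ∧
        (S1 - S).PosSemidef ∧ (S2 - S).PosSemidef ∧ d = S.det}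
      (∏ i, min (lam i) (lam' i)) ∧
    (∏ i, min (lam i) (lam' i))
      = (V⁻¹ * Matrix.diagonal (fun i => min (lam i) (lam' i)) * (V⁻¹)ᵀ).det := by
  have hVT : IsUnit Vᵀ.det := by rwa [det_transpose]
  have hdet2 : V.det ^ 2 = 1 := by
    have h := sq_abs V.det
    rw [hdet] at h
    nlinarith [h]
  have hVdet_ne : V.det ≠ 0 := by
    intro h; rw [h] at hdet2; norm_num at hdet2
  have hdetVi : (V⁻¹).det = (V.det)⁻¹ := by
    rw [det_nonsing_inv, Ring.inverse_eq_inv']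
  have hVi : IsUnit (V⁻¹).det := by
    rw [hdetVi]; exact (isUnit_iff_ne_zero.2 (inv_ne_zero hVdet_ne))
  have hVitT : (V⁻¹)ᵀ = (Vᵀ)⁻¹ := transpose_nonsing_inv V
  -- the determinant of a conjugation by V⁻¹
  have hconjdet : ∀ D : Matrix (Fin n) (Fin n) ℝ,
      (V⁻¹ * D * (V⁻¹)ᵀ).det = D.det := by
    intro D
    rw [det_mul, det_mul, det_transpose, hdetVi]
    have hvv : V.det * V.det = 1 := by nlinarith [hdet2]
    have hvv' : (V.det)⁻¹ * (V.det)⁻¹ = 1 := by rw [← mul_inv, hvv, inv_one]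
    calc (V.det)⁻¹ * D.det * (V.det)⁻¹ = D.det * ((V.det)⁻¹ * (V.det)⁻¹) := by ring
      _ = D.det := by rw [hvv', mul_one]
  have hconjdet' : ∀ D : Matrix (Fin n) (Fin n) ℝ,
      (V * D * Vᵀ).det = D.det := by
    intro D
    rw [det_mul, det_mul, det_transpose]
    have hvv : V.det * V.det = 1 := by nlinarith [hdet2]
    calc V.det * D.det * V.det = D.det * (V.det * V.det) := by ring
      _ = D.det := by rw [hvv, mul_one]
  -- recover S1, S2 from h1, h2
  have hrec : ∀ M : Matrix (Fin n) (Fin n) ℝ, V⁻¹ * (V * M * Vᵀ) * (V⁻¹)ᵀ = M := by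
    intro M
    rw [hVitT, mul_assoc V M Vᵀ, ← mul_assoc V⁻¹, nonsing_inv_mul _ hV, one_mul,
      mul_assoc, mul_nonsing_inv _ hVT, mul_one]
  have hS1eq : S1 = V⁻¹ * Matrix.diagonal lam * (V⁻¹)ᵀ := by
    rw [← h1, hrec]
  have hS2eq : S2 = V⁻¹ * Matrix.diagonal lam' * (V⁻¹)ᵀ := by
    rw [← h2, hrec]
  set mm : Fin n → ℝ := fun i => min (lam i) (lam' i) with hmm_def
  have hmmpos : ∀ i, 0 < mm i := fun i => lt_min (hlam i) (hlam' i)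
  set S0 : Matrix (Fin n) (Fin n) ℝ := V⁻¹ * Matrix.diagonal mm * (V⁻¹)ᵀ with hS0_def
  refine ⟨⟨⟨S0, ?_, ?_, ?_, ?_⟩, ?_⟩, ?_⟩
  · -- S0 PosDef
    exact conj_pd (Matrix.PosDef.diagonal hmmpos) hVi
  · -- S1 - S0 PSD
    have : S1 - S0 = V⁻¹ * Matrix.diagonal (fun i => lam i - mm i) * (V⁻¹)ᵀ := by
      have hd : Matrix.diagonal (fun i => lam i - mm i)
          = Matrix.diagonal lam - Matrix.diagonal mm := by
        ext i j; by_cases h : i = j <;> simp [Matrix.diagonal, h]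
      rw [hS1eq, hS0_def, hd]
      noncomm_ring
    rw [this]
    exact conj_psd _ (Matrix.PosSemidef.diagonal fun i => sub_nonneg.2 (min_le_left _ _))
  · -- S2 - S0 PSD
    have : S2 - S0 = V⁻¹ * Matrix.diagonal (fun i => lam' i - mm i) * (V⁻¹)ᵀ := by
      have hd : Matrix.diagonal (fun i => lam' i - mm i)
          = Matrix.diagonal lam' - Matrix.diagonal mm := by
        ext i j; by_cases h : i = j <;> simp [Matrix.diagonal, h]
      rw [hS2eq, hS0_def, hd]
      noncomm_ring
    rw [this]
    exact conj_psd _ (Matrix.PosSemidef.diagonal fun i => sub_nonneg.2 (min_le_right _ _))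
  · -- value
    rw [hS0_def, hconjdet, det_diagonal]
  · -- upper bound
    rintro d ⟨S, hSpd, hA, hB, rfl⟩
    set T : Matrix (Fin n) (Fin n) ℝ := V * S * Vᵀ with hT_def
    have hTpd : T.PosDef := conj_pd hSpd hV
    have hdA : (Matrix.diagonal lam - T).PosSemidef := by
      have : Matrix.diagonal lam - T = V * (S1 - S) * Vᵀ := by
        rw [← h1, hT_def]; noncomm_ring
      rw [this]
      exact conj_psd _ hA
    have hdB : (Matrix.diagonal lam' - T).PosSemidef := by
      have : Matrix.diagonal lam' - T = V * (S2 - S) * Vᵀ := by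
        rw [← h2, hT_def]; noncomm_ring
      rw [this]
      exact conj_psd _ hB
    have hTle : ∀ i, T i i ≤ mm i := by
      intro i
      have hh1 := psd_diag hdA i
      have hh2 := psd_diag hdB i
      simp only [Matrix.sub_apply, Matrix.diagonal_apply_eq] at hh1 hh2
      exact le_min (by linarith) (by linarith)
    have hdetS : S.det = T.det := (hconjdet' S).symm
    rw [hdetS]
    calc T.det ≤ ∏ i, T i i := hadamard_ineq hTpd
      _ ≤ ∏ i, mm i := Finset.prod_le_prod (fun i _ => (pd_diag hTpd i).le)
          (fun i _ => hTle i)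
  · -- final equality
    rw [hconjdet, det_diagonal]
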